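/- arXiv:1605.03203 — 7 statements merged into one kernel-verified Lean document; each statement's English description precedes it below -/
import Mathlib

section
/- Let P ⊆ ℝ^n be a polytope, c ∈ ℝ^n, A ∈ ℝ^{m×n} with nonnegative entries, b, Δ ∈ ℝ_+^m. Let OPT(Δ) = min{cᵀx : x ∈ P, Ax ≤ b + Δ} and OPT(0) = min{cᵀx : x ∈ P, Ax ≤ b} (assume the latter is feasible). Suppose x* is optimal for the LP defining OPT(Δ), y* ∈ ℝ_+^m is such that x* minimizes x ↦ (c + Aᵀy*)ᵀx over P and (y*)ᵀ(Ax* − b − Δ) = 0, and min_{x∈P}(cᵀx + (y*)ᵀ(Ax − b − 0)) ≤ OPT(0). If x̃ lies on the minimal face of P containing x* and satisfies Ax* − Δ ≤ Ax̃ ≤ Ax* + Δ componentwise, then cᵀx̃ ≤ OPT(0) and Ax̃ ≤ b + 2Δ. -/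
open Matrix

/-- the additive version of the reduction.  If `x*` is optimal for the LP
with constraints `Ax ≤ b + Δ`, `y* ≥ 0` certifies Lagrangian optimality with
complementary slackness, weak duality `φ_0(y*) ≤ OPT(0)` holds, and `x̃` lies on the
minimal face of `P` containing `x*` with `Ax* − Δ ≤ Ax̃ ≤ Ax* + Δ`, then
`cᵀx̃ ≤ OPT(0)` and `Ax̃ ≤ b + 2Δ`. -/
theorem additive_reduction {n m : ℕ} (P : Set (Fin n → ℝ))
    (hpoly : ∃ s : Finset (Fin n → ℝ), P = convexHull ℝ (↑s : Set (Fin n → ℝ)))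
    (c : Fin n → ℝ)
    (A : Matrix (Fin m) (Fin n) ℝ) (hA : ∀ i j, 0 ≤ A i j)
    (b Δ : Fin m → ℝ) (hb : ∀ i, 0 ≤ b i) (hΔ : ∀ i, 0 ≤ Δ i)
    (OPTΔ OPT0 : ℝ)
    (hOPTΔ : OPTΔ = sInf ((fun x => c ⬝ᵥ x) '' {x ∈ P | ∀ i, A.mulVec x i ≤ b i + Δ i}))
    (hOPT0 : OPT0 = sInf ((fun x => c ⬝ᵥ x) '' {x ∈ P | ∀ i, A.mulVec x i ≤ b i}))
    (hfeas0 : {x ∈ P | ∀ i, A.mulVec x i ≤ b i}.Nonempty)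
    -- x* is optimal for the LP defining OPT(Δ)
    (xstar : Fin n → ℝ) (hxP : xstar ∈ P)
    (hxfeas : ∀ i, A.mulVec xstar i ≤ b i + Δ i)
    (hxopt : c ⬝ᵥ xstar = OPTΔ)
    -- y* ≥ 0, Lagrangian optimality and complementary slackness
    (ystar : Fin m → ℝ) (hy : ∀ i, 0 ≤ ystar i)
    (hmin : ∀ x ∈ P,
      (c + A.transpose.mulVec ystar) ⬝ᵥ xstar ≤ (c + A.transpose.mulVec ystar) ⬝ᵥ x)
    (hcs : ystar ⬝ᵥ (A.mulVec xstar - b - Δ) = 0)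
    -- weak duality at Δ = 0
    (hweak : sInf ((fun x => c ⬝ᵥ x + ystar ⬝ᵥ (A.mulVec x - b)) '' P) ≤ OPT0)
    -- x̃ lies on the minimal face of P containing x*, two-sided additive rounding
    (F : Set (Fin n → ℝ)) (hF : IsExtreme ℝ P F) (hxF : xstar ∈ F)
    (hFmin : ∀ G : Set (Fin n → ℝ), IsExtreme ℝ P G → xstar ∈ G → F ⊆ G)
    (xtil : Fin n → ℝ) (hxtilF : xtil ∈ F)
    (hround : ∀ i, A.mulVec xstar i - Δ i ≤ A.mulVec xtil i ∧
      A.mulVec xtil i ≤ A.mulVec xstar i + Δ i) :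
    c ⬝ᵥ xtil ≤ OPT0 ∧ ∀ i, A.mulVec xtil i ≤ b i + 2 * Δ i := by
  classical
  set L : (Fin n → ℝ) → ℝ := fun x => (c + A.transpose.mulVec ystar) ⬝ᵥ x with hLdef
  -- the argmin set is an extreme set containing xstar
  have hS : IsExtreme ℝ P {x ∈ P | L x ≤ L xstar} := by
    constructor
    · intro x hx; exact hx.1
    · rintro x hx y hy z ⟨hzP, hzL⟩ hz
      obtain ⟨a, b', ha, hb', hab, hz'⟩ := hz
      have hLx : L xstar ≤ L x := hmin x hx
      have hLy : L xstar ≤ L y := hmin y hy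
      have hLz : L z = a * L x + b' * L y := by
        rw [← hz']
        simp only [hLdef, dotProduct_add, dotProduct_smul, smul_eq_mul]
      have h1 : a * L x + b' * L y ≤ L xstar := hLz ▸ hzL
      have h2 : b' * L xstar ≤ b' * L y := mul_le_mul_of_nonneg_left hLy hb'.le
      have h2' : a * L xstar ≤ a * L x := mul_le_mul_of_nonneg_left hLx ha.le
      have h4 : a * L xstar + b' * L xstar = L xstar := by
        rw [← add_mul, hab, one_mul]
      have h3 : a * L x ≤ a * L xstar := by linarith
      have h3' : b' * L y ≤ b' * L xstar := by linarith
      exact ⟨hx, le_of_mul_le_mul_left h3 ha⟩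
  have hsub := hFmin _ hS ⟨hxP, le_refl _⟩
  have hxtilP : xtil ∈ P := hF.1 hxtilF
  have hLeq : L xtil = L xstar := le_antisymm (hsub hxtilF).2 (hmin xtil hxtilP)
  -- unfold L
  have hLexp : ∀ x, L x = c ⬝ᵥ x + ystar ⬝ᵥ A.mulVec x := by
    intro x
    simp [hLdef, add_dotProduct, mulVec_transpose, dotProduct_mulVec]
  have hkey : c ⬝ᵥ xtil + ystar ⬝ᵥ A.mulVec xtil
      = c ⬝ᵥ xstar + ystar ⬝ᵥ A.mulVec xstar := by
    rw [← hLexp, ← hLexp, hLeq]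
  -- complementary slackness expanded
  have hcs' : ystar ⬝ᵥ A.mulVec xstar = ystar ⬝ᵥ b + ystar ⬝ᵥ Δ := by
    have := hcs
    rw [dotProduct_sub, dotProduct_sub] at this
    linarith
  -- rounding bound on dual term
  have hrd : ystar ⬝ᵥ A.mulVec xstar - ystar ⬝ᵥ A.mulVec xtil ≤ ystar ⬝ᵥ Δ := by
    rw [← dotProduct_sub]
    unfold dotProduct
    apply Finset.sum_le_sum
    intro i _
    have := (hround i).1
    have hyi := hy i
    have : (A.mulVec xstar - A.mulVec xtil) i ≤ Δ i := by
      simp only [Pi.sub_apply]; linarith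
    exact mul_le_mul_of_nonneg_left this hyi
  -- lower bound on the dual infimum
  have hlb : c ⬝ᵥ xstar + ystar ⬝ᵥ Δ
      ≤ sInf ((fun x => c ⬝ᵥ x + ystar ⬝ᵥ (A.mulVec x - b)) '' P) := by
    refine le_csInf ⟨_, ⟨xstar, hxP, rfl⟩⟩ ?_
    rintro r ⟨x, hx, rfl⟩
    have h1' : c ⬝ᵥ xstar + ystar ⬝ᵥ A.mulVec xstar
        ≤ c ⬝ᵥ x + ystar ⬝ᵥ A.mulVec x := by
      rw [← hLexp, ← hLexp]; exact hmin x hx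
    show c ⬝ᵥ xstar + ystar ⬝ᵥ Δ ≤ c ⬝ᵥ x + ystar ⬝ᵥ (A.mulVec x - b)
    rw [dotProduct_sub]
    linarith
  constructor
  · linarith
  · intro i
    have := (hround i).2
    have := hxfeas i
    linarith
end

section
/- Equal perturbed costs within a tight set: let x ∈ ℝ^E be a point of the spanning tree polytope of a connected graph G = (V,E), let L ⊆ V with x(E(L)) = |L| − 1, and let e, f be two edges of supp(x) that connect the same pair of children in the contraction: formally, suppose for every set S ⊆ V whose spanning-tree constraint is tight at x (i.e., x(E(S)) = |S|−1 or S = V), e ∈ E(S) if and only if f ∈ E(S). Let w ∈ ℝ^E and suppose x minimizes z ↦ wᵀz over the spanning tree polytope. Then w_e = w_f. -/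
open Finset
open scoped Classical

/-- Membership in the spanning tree polytope of the graph on vertex set `V` with edge
set `E` and endpoint maps `u v : E → V`. -/
def InSTPolytope {V E : Type*} [Fintype V] [Fintype E] (u v : E → V) (z : E → ℝ) : Prop :=
  (∀ e, 0 ≤ z e) ∧
  (∀ S : Finset V, S.Nonempty → S ≠ Finset.univ →
    ∑ e ∈ Finset.univ.filter (fun e => u e ∈ S ∧ v e ∈ S), z e ≤ (S.card : ℝ) - 1) ∧
  (∑ e : E, z e = (Fintype.card V : ℝ) - 1)

/-- equal perturbed costs within a tight set.  If `x` is in the spanning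
tree polytope of a connected graph, `L` is tight at `x`, the two support edges `e, f`
lie in the same tight sets (every set `S` with `x(E(S)) = |S|−1` or `S = V` contains
both or neither), and `x` minimizes `wᵀz` over the spanning tree polytope, then
`w_e = w_f`. -/
theorem equal_cost_in_tight_set {V E : Type*} [Fintype V] [Fintype E]
    (u v : E → V)
    (hconn : (SimpleGraph.fromRel (fun a b => ∃ e : E, u e = a ∧ v e = b)).Connected)
    (x : E → ℝ) (hx : InSTPolytope u v x)
    (L : Finset V)
    (hL : ∑ e ∈ Finset.univ.filter (fun e => u e ∈ L ∧ v e ∈ L), x e = (L.card : ℝ) - 1)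
    (e f : E) (hef : e ≠ f) (he : 0 < x e) (hf : 0 < x f)
    (heL : u e ∈ L ∧ v e ∈ L) (hfL : u f ∈ L ∧ v f ∈ L)
    (htight : ∀ S : Finset V,
      ((∑ g ∈ Finset.univ.filter (fun g => u g ∈ S ∧ v g ∈ S), x g = (S.card : ℝ) - 1)
        ∨ S = Finset.univ) →
      ((u e ∈ S ∧ v e ∈ S) ↔ (u f ∈ S ∧ v f ∈ S)))
    (w : E → ℝ)
    (hmin : ∀ z : E → ℝ, InSTPolytope u v z → ∑ g, w g * x g ≤ ∑ g, w g * z g) :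
    w e = w f := by
  classical
  obtain ⟨hx0, hxS, hxT⟩ := hx
  -- the perturbation direction
  set δ : E → ℝ := fun g => if g = e then 1 else if g = f then -1 else 0 with hδdef
  have hδsum : ∀ F : Finset E, ∑ g ∈ F, δ g
      = (if e ∈ F then (1:ℝ) else 0) + (if f ∈ F then (-1:ℝ) else 0) := by
    intro F
    have hpt : ∀ g, δ g = (if g = e then (1:ℝ) else 0) + (if g = f then (-1:ℝ) else 0) := by
      intro g
      by_cases hg : g = e
      · subst hg; simp [hδdef, hef]
      · by_cases hg' : g = f <;> simp [hδdef, hg, hg', Ne.symm hef]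
    rw [Finset.sum_congr rfl (fun g _ => hpt g), Finset.sum_add_distrib,
      Finset.sum_ite_eq' F e, Finset.sum_ite_eq' F f]
  have hwδ : ∀ F : Finset E, ∑ g ∈ F, w g * δ g
      = (if e ∈ F then w e else 0) + (if f ∈ F then -(w f) else 0) := by
    intro F
    have hpt : ∀ g, w g * δ g
        = (if g = e then w g else 0) + (if g = f then -(w g) else 0) := by
      intro g
      by_cases hg : g = e
      · subst hg; simp [hδdef, hef]
      · by_cases hg' : g = f <;> simp [hδdef, hg, hg', Ne.symm hef]
    rw [Finset.sum_congr rfl (fun g _ => hpt g), Finset.sum_add_distrib,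
      Finset.sum_ite_eq' F e, Finset.sum_ite_eq' F f]
  -- slack of a set
  set slack : Finset V → ℝ :=
    fun S => (S.card : ℝ) - 1 - ∑ g ∈ Finset.univ.filter (fun g => u g ∈ S ∧ v g ∈ S), x g
    with hslack
  set B : Finset (Finset V) :=
    Finset.univ.filter (fun S => S.Nonempty ∧ S ≠ Finset.univ ∧ 0 < slack S) with hB
  set ε : ℝ := min (min (x e) (x f)) (if h : B.Nonempty then B.inf' h slack else 1) with hε
  have hεpos : 0 < ε := by
    refine lt_min (lt_min he hf) ?_
    split
    · next h =>
        rw [Finset.lt_inf'_iff]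
        intro S hS
        exact ((Finset.mem_filter.mp hS).2).2.2
    · norm_num
  have hεxe : ε ≤ x e := le_trans (min_le_left _ _) (min_le_left _ _)
  have hεxf : ε ≤ x f := le_trans (min_le_left _ _) (min_le_right _ _)
  -- the perturbed point is in the polytope
  have key : ∀ t : ℝ, |t| ≤ ε → InSTPolytope u v (fun g => x g + t * δ g) := by
    intro t ht
    have ht1 : -ε ≤ t := neg_le_of_abs_le ht
    have ht2 : t ≤ ε := le_of_abs_le ht
    refine ⟨?_, ?_, ?_⟩
    · intro g
      show 0 ≤ x g + t * δ g
      by_cases hg : g = e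
      · have hval : δ g = 1 := by simp [hδdef, hg]
        have hxg : x g = x e := by rw [hg]
        rw [hval, mul_one, hxg]; linarith
      · by_cases hg' : g = f
        · have hval : δ g = -1 := by simp [hδdef, hg, hg', Ne.symm hef]
          have hxg : x g = x f := by rw [hg']
          rw [hval, mul_neg_one, hxg]; linarith
        · have hval : δ g = 0 := by simp [hδdef, hg, hg']
          rw [hval, mul_zero, add_zero]; exact hx0 g
    · intro S hSne hSuniv
      have hsplit : ∑ g ∈ Finset.univ.filter (fun g => u g ∈ S ∧ v g ∈ S), (x g + t * δ g)
          = (∑ g ∈ Finset.univ.filter (fun g => u g ∈ S ∧ v g ∈ S), x g)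
            + t * ∑ g ∈ Finset.univ.filter (fun g => u g ∈ S ∧ v g ∈ S), δ g := by
        rw [Finset.sum_add_distrib, Finset.mul_sum]
      rw [hsplit]
      by_cases htS : ∑ g ∈ Finset.univ.filter (fun g => u g ∈ S ∧ v g ∈ S), x g
          = (S.card : ℝ) - 1
      · -- tight set: e and f both in or both out
        have hiff := htight S (Or.inl htS)
        have hzero : ∑ g ∈ Finset.univ.filter (fun g => u g ∈ S ∧ v g ∈ S), δ g = 0 := by
          rw [hδsum]
          by_cases heS : u e ∈ S ∧ v e ∈ S
          · have hfS : u f ∈ S ∧ v f ∈ S := hiff.mp heS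
            simp [heS, hfS]
          · have hfS : ¬ (u f ∈ S ∧ v f ∈ S) := fun h => heS (hiff.mpr h)
            simp [heS, hfS]
        rw [hzero, mul_zero, add_zero, htS]
      · -- non-tight: slack positive
        have hle := hxS S hSne hSuniv
        have hslackpos : 0 < slack S := by
          simp only [hslack]
          cases lt_or_eq_of_le hle with
          | inl h => linarith
          | inr h => exact absurd h htS
        have hSB : S ∈ B := by
          rw [hB, Finset.mem_filter]
          exact ⟨Finset.mem_univ _, hSne, hSuniv, hslackpos⟩
        have hBne : B.Nonempty := ⟨S, hSB⟩
        have hεslack : ε ≤ slack S := by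
          refine le_trans (min_le_right _ _) ?_
          rw [dif_pos hBne]
          exact Finset.inf'_le _ hSB
        have hdbound : |∑ g ∈ Finset.univ.filter (fun g => u g ∈ S ∧ v g ∈ S), δ g| ≤ 1 := by
          rw [hδsum]
          by_cases h1 : e ∈ Finset.univ.filter (fun g => u g ∈ S ∧ v g ∈ S) <;>
            by_cases h2 : f ∈ Finset.univ.filter (fun g => u g ∈ S ∧ v g ∈ S) <;>
              simp [h1, h2] <;> norm_num
        have : t * ∑ g ∈ Finset.univ.filter (fun g => u g ∈ S ∧ v g ∈ S), δ g ≤ ε := by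
          calc t * _ ≤ |t * _| := le_abs_self _
            _ = |t| * |_| := abs_mul _ _
            _ ≤ ε * 1 := mul_le_mul ht hdbound (abs_nonneg _) (le_of_lt hεpos)
            _ = ε := mul_one ε
        have h2 : ∑ g ∈ Finset.univ.filter (fun g => u g ∈ S ∧ v g ∈ S), x g + ε
            ≤ (S.card : ℝ) - 1 := by
          simp only [hslack] at hεslack
          linarith
        linarith
    · have hzero : ∑ g : E, δ g = 0 := by
        rw [hδsum]
        simp
      rw [Finset.sum_add_distrib, ← Finset.mul_sum, hzero, mul_zero, add_zero]
      exact hxT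
  -- use optimality in both directions
  have hdot : ∀ t : ℝ, ∑ g, w g * (x g + t * δ g)
      = (∑ g, w g * x g) + t * (w e - w f) := by
    intro t
    have : ∀ g, w g * (x g + t * δ g) = w g * x g + t * (w g * δ g) := by
      intro g; ring
    rw [Finset.sum_congr rfl (fun g _ => this g), Finset.sum_add_distrib, ← Finset.mul_sum,
      hwδ]
    simp only [Finset.mem_univ, if_true]
    ring
  have h1 := hmin _ (key ε (by rw [abs_of_pos hεpos]))
  have h2 := hmin _ (key (-ε) (by rw [abs_neg, abs_of_pos hεpos]))
  rw [hdot] at h1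
  rw [hdot] at h2
  nlinarith [hεpos, h1, h2]
end

section
/- Contraction preserves fractional spanning trees: let G = (V,E) be connected, x a point of the spanning tree polytope of G, and let A₁, …, A_k ⊆ V be pairwise disjoint sets with x(E(A_i)) = |A_i| − 1 for each i. Let G' be the graph obtained from G by contracting each A_i to a single node, and let x' be x restricted to the edges of G' (edges of E not inside any A_i). Then x' lies in the spanning tree polytope of G'. -/
open Finset
open scoped Classical

/-- contraction preserves fractional spanning trees.  The node sets of the
contracted graph `G'` correspond to subsets `R ⊆ V` that are *closed* with respect to the
contracted sets `A₁, …, A_k` (each `A_i` meeting `R` is contained in `R`); the number of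
nodes of `G'` inside such an `R` is `#{i : A_i ⊆ R} + |R \ ⋃ᵢ A_i|`, and the edges of
`G'` are the edges of `G` not lying inside any `A_i`.  The conclusion states that the
restriction `x'` of `x` to the edges of `G'` satisfies all spanning-tree-polytope
constraints of `G'`. -/
theorem contraction_preserves {V E : Type*} [Fintype V] [Fintype E] [DecidableEq V]
    (u v : E → V)
    (hconn : (SimpleGraph.fromRel (fun a b => ∃ e : E, u e = a ∧ v e = b)).Connected)
    (x : E → ℝ) (hx : InSTPolytope u v x)
    (k : ℕ) (A : Fin k → Finset V)
    (hAne : ∀ i, (A i).Nonempty)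
    (hdisj : ∀ i j, i ≠ j → Disjoint (A i) (A j))
    (htight : ∀ i,
      ∑ e ∈ Finset.univ.filter (fun e => u e ∈ A i ∧ v e ∈ A i), x e
        = ((A i).card : ℝ) - 1) :
    (∀ e : E, (¬ ∃ i, u e ∈ A i ∧ v e ∈ A i) → 0 ≤ x e) ∧
    (∀ R : Finset V, (∀ i, ((A i) ∩ R).Nonempty → A i ⊆ R) →
      R.Nonempty → R ≠ Finset.univ →
      ∑ e ∈ Finset.univ.filter
          (fun e => (u e ∈ R ∧ v e ∈ R) ∧ ¬ ∃ i, u e ∈ A i ∧ v e ∈ A i), x e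
        ≤ (((Finset.univ.filter (fun i : Fin k => A i ⊆ R)).card : ℝ)
            + ((R \ (Finset.univ : Finset (Fin k)).biUnion A).card : ℝ)) - 1) ∧
    (∑ e ∈ Finset.univ.filter (fun e => ¬ ∃ i, u e ∈ A i ∧ v e ∈ A i), x e
      = ((k : ℝ)
          + (((Finset.univ : Finset V) \ (Finset.univ : Finset (Fin k)).biUnion A).card : ℝ))
        - 1) := by
  obtain ⟨hx0, hxS, hxtot⟩ := hx
  -- general set-splitting and counting lemmas for closed sets R
  have hsetsplit : ∀ R : Finset V, (∀ i, ((A i) ∩ R).Nonempty → A i ⊆ R) →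
      Finset.univ.filter
        (fun e => (u e ∈ R ∧ v e ∈ R) ∧ ∃ i, u e ∈ A i ∧ v e ∈ A i)
      = (Finset.univ.filter (fun i : Fin k => A i ⊆ R)).biUnion
          (fun i => Finset.univ.filter (fun e => u e ∈ A i ∧ v e ∈ A i)) := by
    intro R hclosed
    ext e
    simp only [Finset.mem_filter, Finset.mem_univ, true_and, Finset.mem_biUnion]
    constructor
    · rintro ⟨⟨huR, hvR⟩, i, hui, hvi⟩
      exact ⟨i, hclosed i ⟨u e, Finset.mem_inter.2 ⟨hui, huR⟩⟩, hui, hvi⟩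
    · rintro ⟨i, hiR, hui, hvi⟩
      exact ⟨⟨hiR hui, hiR hvi⟩, i, hui, hvi⟩
  have hdisjF : ∀ (T : Finset (Fin k)), ∀ i ∈ T, ∀ j ∈ T, i ≠ j →
      Disjoint (Finset.univ.filter (fun e => u e ∈ A i ∧ v e ∈ A i))
        (Finset.univ.filter (fun e => u e ∈ A j ∧ v e ∈ A j)) := by
    intro T i _ j _ hij
    refine Finset.disjoint_left.2 ?_
    intro e he he'
    simp only [Finset.mem_filter] at he he'
    exact (Finset.disjoint_left.1 (hdisj i j hij)) he.2.1 he'.2.1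
  have hsplit : ∀ R : Finset V, (∀ i, ((A i) ∩ R).Nonempty → A i ⊆ R) →
      ∑ e ∈ Finset.univ.filter (fun e => u e ∈ R ∧ v e ∈ R), x e
        = (∑ e ∈ Finset.univ.filter
            (fun e => (u e ∈ R ∧ v e ∈ R) ∧ ¬ ∃ i, u e ∈ A i ∧ v e ∈ A i), x e)
          + ∑ i ∈ Finset.univ.filter (fun i : Fin k => A i ⊆ R),
              ∑ e ∈ Finset.univ.filter (fun e => u e ∈ A i ∧ v e ∈ A i), x e := by
    intro R hclosed
    rw [← Finset.sum_biUnion (hdisjF _), ← hsetsplit R hclosed,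
      ← Finset.sum_filter_add_sum_filter_not
        (Finset.univ.filter (fun e => u e ∈ R ∧ v e ∈ R))
        (fun e => ∃ i, u e ∈ A i ∧ v e ∈ A i) x, add_comm]
    congr 1 <;> rw [Finset.filter_filter]
  have hcard : ∀ R : Finset V, (∀ i, ((A i) ∩ R).Nonempty → A i ⊆ R) →
      R.card = (∑ i ∈ Finset.univ.filter (fun i : Fin k => A i ⊆ R), (A i).card)
        + (R \ (Finset.univ : Finset (Fin k)).biUnion A).card := by
    intro R hclosed
    have hsub : (Finset.univ.filter (fun i : Fin k => A i ⊆ R)).biUnion A ⊆ R := by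
      intro a ha
      rcases Finset.mem_biUnion.1 ha with ⟨i, hi, hai⟩
      exact (Finset.mem_filter.1 hi).2 hai
    have hRdiff : R \ (Finset.univ : Finset (Fin k)).biUnion A
        = R \ (Finset.univ.filter (fun i : Fin k => A i ⊆ R)).biUnion A := by
      ext a
      simp only [Finset.mem_sdiff, Finset.mem_biUnion, Finset.mem_filter, Finset.mem_univ,
        true_and]
      constructor
      · rintro ⟨haR, h⟩
        exact ⟨haR, fun ⟨i, _, hai⟩ => h ⟨i, hai⟩⟩
      · rintro ⟨haR, h⟩
        refine ⟨haR, fun ⟨i, hai⟩ => h ⟨i, ?_, hai⟩⟩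
        exact hclosed i ⟨a, Finset.mem_inter.2 ⟨hai, haR⟩⟩
    have hcb : ((Finset.univ.filter (fun i : Fin k => A i ⊆ R)).biUnion A).card
        = ∑ i ∈ Finset.univ.filter (fun i : Fin k => A i ⊆ R), (A i).card :=
      Finset.card_biUnion (fun i _ j _ hij => hdisj i j hij)
    rw [hRdiff, Finset.card_sdiff_of_subset hsub, hcb]
    have := Finset.card_le_card hsub
    rw [hcb] at this
    omega
  refine ⟨fun e _ => hx0 e, ?_, ?_⟩
  · intro R hclosed hRne hRuniv
    have hS : ∑ e ∈ Finset.univ.filter (fun e => u e ∈ R ∧ v e ∈ R), x e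
        ≤ (R.card : ℝ) - 1 := by
      have h := hxS R hRne hRuniv
      convert h using 2
      ext e
      simp
    have h1 := hsplit R hclosed
    have h2 : ∑ i ∈ Finset.univ.filter (fun i : Fin k => A i ⊆ R),
        ∑ e ∈ Finset.univ.filter (fun e => u e ∈ A i ∧ v e ∈ A i), x e
        = ∑ i ∈ Finset.univ.filter (fun i : Fin k => A i ⊆ R), (((A i).card : ℝ) - 1) :=
      Finset.sum_congr rfl (fun i _ => htight i)
    have h3 : ∑ i ∈ Finset.univ.filter (fun i : Fin k => A i ⊆ R), (((A i).card : ℝ) - 1)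
        = (∑ i ∈ Finset.univ.filter (fun i : Fin k => A i ⊆ R), ((A i).card : ℝ))
          - ((Finset.univ.filter (fun i : Fin k => A i ⊆ R)).card : ℝ) := by
      rw [Finset.sum_sub_distrib, Finset.sum_const, nsmul_eq_mul, mul_one]
    have h4 : (R.card : ℝ)
        = (∑ i ∈ Finset.univ.filter (fun i : Fin k => A i ⊆ R), ((A i).card : ℝ))
          + ((R \ (Finset.univ : Finset (Fin k)).biUnion A).card : ℝ) := by
      have := hcard R hclosed
      push_cast [this]
      ring
    rw [h2, h3] at h1
    rw [h4, h1] at hS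
    linarith [hS]
  · have hclosedU : ∀ i, ((A i) ∩ (Finset.univ : Finset V)).Nonempty → A i ⊆ Finset.univ :=
      fun i _ => Finset.subset_univ _
    have h1 := hsplit Finset.univ hclosedU
    have hTu : Finset.univ.filter (fun i : Fin k => A i ⊆ (Finset.univ : Finset V))
        = Finset.univ := by
      ext i; simp [Finset.subset_univ]
    have hfu : Finset.univ.filter
        (fun e => u e ∈ (Finset.univ : Finset V) ∧ v e ∈ Finset.univ) = Finset.univ := by
      ext e; simp
    have hfu2 : Finset.univ.filter
        (fun e => (u e ∈ (Finset.univ : Finset V) ∧ v e ∈ Finset.univ)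
          ∧ ¬ ∃ i, u e ∈ A i ∧ v e ∈ A i)
        = Finset.univ.filter (fun e => ¬ ∃ i, u e ∈ A i ∧ v e ∈ A i) := by
      ext e; simp
    rw [hfu, hfu2, hTu] at h1
    have h2 : ∑ i : Fin k, ∑ e ∈ Finset.univ.filter
        (fun e => u e ∈ A i ∧ v e ∈ A i), x e
        = (∑ i : Fin k, ((A i).card : ℝ)) - k := by
      rw [Finset.sum_congr rfl (fun i _ => htight i), Finset.sum_sub_distrib,
        Finset.sum_const, nsmul_eq_mul, mul_one, Finset.card_univ, Fintype.card_fin]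
    have h4 : ((Fintype.card V : ℕ) : ℝ)
        = (∑ i : Fin k, ((A i).card : ℝ))
          + (((Finset.univ : Finset V) \ (Finset.univ : Finset (Fin k)).biUnion A).card : ℝ) := by
      have := hcard Finset.univ hclosedU
      rw [hTu] at this
      rw [Finset.card_univ] at this
      push_cast [this]
      ring
    linarith [h1, h2, h4, hxtot]
end

section
/- Concatenation of spanning trees over a laminar decomposition: let G = (V,E) be connected and let ℒ be a laminar family of subsets of V containing V and all singletons. For each L ∈ ℒ let G_L be the graph obtained from (L, E(L)) by contracting the (inclusion-maximal proper) children of L in ℒ, and suppose T_L is a spanning tree of G_L. Then the union T = ⋃_{L∈ℒ} T_L (viewing edges of G_L as edges of G) is a spanning tree of G. -/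
open Finset
open scoped Classical

/-- The children of `L` in the laminar family `ℒ`: the inclusion-maximal members of `ℒ`
properly contained in `L`. -/
noncomputable def children {V : Type*} (ℒ : Finset (Finset V)) (L : Finset V) :
    Finset (Finset V) :=
  ℒ.filter (fun A => A ⊂ L ∧ ∀ B ∈ ℒ, A ⊂ B → ¬ B ⊂ L)

/-- `e` is an edge of the contracted graph `G_L`: both endpoints lie in `L` but not both
inside a common child of `L`. -/
def edgeOfBlock {V E : Type*} (u v : E → V) (ℒ : Finset (Finset V)) (L : Finset V)
    (e : E) : Prop :=
  u e ∈ L ∧ v e ∈ L ∧ ¬ ∃ A ∈ children ℒ L, u e ∈ A ∧ v e ∈ A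

lemma mem_children_iff {V : Type*} {ℒ : Finset (Finset V)} {L A : Finset V} :
    A ∈ children ℒ L ↔ A ∈ ℒ ∧ A ⊂ L ∧ ∀ B ∈ ℒ, A ⊂ B → ¬ B ⊂ L := by
  simp [children]

/-- Every member of `ℒ` properly contained in `L` is contained in a child of `L`. -/
lemma exists_child_above {V : Type*} [DecidableEq V] (ℒ : Finset (Finset V))
    (L A : Finset V) (hA : A ∈ ℒ) (hAL : A ⊂ L) :
    ∃ C ∈ children ℒ L, A ⊆ C := by
  classical
  set s := ℒ.filter (fun B => A ⊆ B ∧ B ⊂ L) with hs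
  have hsne : s.Nonempty := ⟨A, by simp [hs, hA, hAL]⟩
  obtain ⟨B, hBs, hBmax⟩ := s.exists_max_image Finset.card hsne
  rw [hs, mem_filter] at hBs
  refine ⟨B, mem_children_iff.2 ⟨hBs.1, hBs.2.2, fun B' hB' hBB' hB'L => ?_⟩, hBs.2.1⟩
  have hB's : B' ∈ s := by
    rw [hs, mem_filter]
    exact ⟨hB', hBs.2.1.trans hBB'.subset, hB'L⟩
  exact absurd (Finset.card_lt_card hBB') (not_lt.2 (hBmax B' hB's))

/-- Every non-`univ` member of `ℒ` is a child of some member. -/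
lemma exists_parent {V : Type*} [Fintype V] [DecidableEq V] (ℒ : Finset (Finset V))
    (hV : (Finset.univ : Finset V) ∈ ℒ) (A : Finset V) (hA : A ∈ ℒ)
    (hAu : A ≠ Finset.univ) : ∃ L ∈ ℒ, A ∈ children ℒ L := by
  classical
  set s := ℒ.filter (fun B => A ⊂ B) with hs
  have hsne : s.Nonempty := ⟨Finset.univ, by
    rw [hs, mem_filter]
    exact ⟨hV, Finset.ssubset_univ_iff.2 hAu⟩⟩
  obtain ⟨L, hLs, hLmin⟩ := s.exists_min_image Finset.card hsne
  rw [hs, mem_filter] at hLs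
  refine ⟨L, hLs.1, mem_children_iff.2 ⟨hA, hLs.2, fun B hB hAB hBL => ?_⟩⟩
  have hBs : B ∈ s := by rw [hs, mem_filter]; exact ⟨hB, hAB⟩
  exact absurd (Finset.card_lt_card hBL) (not_lt.2 (hLmin B hBs))

/-- A set is a child of at most one member of a laminar family. -/
lemma child_unique {V : Type*} [DecidableEq V] (ℒ : Finset (Finset V))
    (hlaminar : ∀ A ∈ ℒ, ∀ B ∈ ℒ, A ⊆ B ∨ B ⊆ A ∨ Disjoint A B)
    (hne : ∀ A ∈ ℒ, A.Nonempty)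
    {A L L' : Finset V} (hL : L ∈ ℒ) (hL' : L' ∈ ℒ)
    (h1 : A ∈ children ℒ L) (h2 : A ∈ children ℒ L') : L = L' := by
  obtain ⟨hA1, hAL, hmax⟩ := mem_children_iff.1 h1
  obtain ⟨_, hAL', hmax'⟩ := mem_children_iff.1 h2
  by_contra hne'
  rcases hlaminar L hL L' hL' with h | h | h
  · exact hmax' L hL (hAL.trans_subset (le_refl L)) (h.ssubset_of_ne hne')
  · exact hmax L' hL' hAL' (h.ssubset_of_ne (Ne.symm hne'))
  · obtain ⟨a, ha⟩ := hne A hA1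
    exact (Finset.disjoint_left.1 h (hAL.subset ha)) (hAL'.subset ha)

/-- concatenation of spanning trees over a laminar decomposition.  The
nodes of the contracted graph `G_L` are the children of `L`; a subset `R ⊆ L` that is a
union of children corresponds to a node set of `G_L`.  "`T L` is a spanning tree of
`G_L`" is expressed by: `T L ⊆ E_L`, `|T L| = (#children of L) − 1`, and every nonempty
proper union-of-children `R ⊊ L` is crossed by an edge of `T L`.  The conclusion states
that `T = ⋃_{L ∈ ℒ} T L` is a spanning tree of `G`: it has `|V| − 1` edges and crosses
every nonempty proper subset of `V`. -/
theorem laminar_concatenation {V E : Type*} [Fintype V] [Fintype E]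
    [DecidableEq V] [DecidableEq E]
    (u v : E → V)
    (hconn : (SimpleGraph.fromRel (fun a b => ∃ e : E, u e = a ∧ v e = b)).Connected)
    (ℒ : Finset (Finset V))
    (hlaminar : ∀ A ∈ ℒ, ∀ B ∈ ℒ, A ⊆ B ∨ B ⊆ A ∨ Disjoint A B)
    (hne : ∀ A ∈ ℒ, A.Nonempty)
    (hV : (Finset.univ : Finset V) ∈ ℒ)
    (hsingle : ∀ a : V, ({a} : Finset V) ∈ ℒ)
    (T : Finset V → Finset E)
    (hTsub : ∀ L ∈ ℒ, ∀ e ∈ T L, edgeOfBlock u v ℒ L e)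
    (hTcard : ∀ L ∈ ℒ, (T L).card = (children ℒ L).card - 1)
    (hTconn : ∀ L ∈ ℒ, ∀ R : Finset V, R ⊆ L →
      (∀ a ∈ R, ∃ A ∈ children ℒ L, a ∈ A ∧ A ⊆ R) → R.Nonempty → R ≠ L →
      ∃ e ∈ T L, (u e ∈ R ∧ v e ∈ L \ R) ∨ (v e ∈ R ∧ u e ∈ L \ R)) :
    (ℒ.biUnion T).card = Fintype.card V - 1 ∧
    ∀ S : Finset V, S.Nonempty → S ≠ Finset.univ →
      ∃ e ∈ ℒ.biUnion T, (u e ∈ S ∧ v e ∉ S) ∨ (u e ∉ S ∧ v e ∈ S) := by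
  classical
  constructor
  · -- cardinality
    -- if e ∈ T L1 ∩ T L2 with L2 ⊂ L1, contradiction
    have key : ∀ L1 ∈ ℒ, ∀ L2 ∈ ℒ, L2 ⊂ L1 → ∀ e, e ∈ T L1 → e ∈ T L2 → False := by
      intro L1 h1 L2 h2 hsub e he1 he2
      obtain ⟨hu1, hv1, hn1⟩ := hTsub L1 h1 e he1
      obtain ⟨hu2, hv2, -⟩ := hTsub L2 h2 e he2
      obtain ⟨C, hC, hC2⟩ := exists_child_above ℒ L1 L2 h2 hsub
      exact hn1 ⟨C, hC, hC2 hu2, hC2 hv2⟩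
    have hdisj : ∀ L1 ∈ ℒ, ∀ L2 ∈ ℒ, L1 ≠ L2 → Disjoint (T L1) (T L2) := by
      intro L1 h1 L2 h2 hneq
      rw [Finset.disjoint_left]
      intro e he1 he2
      obtain ⟨hu1, hv1, -⟩ := hTsub L1 h1 e he1
      obtain ⟨hu2, hv2, -⟩ := hTsub L2 h2 e he2
      rcases hlaminar L1 h1 L2 h2 with h | h | h
      · exact key L2 h2 L1 h1 (h.ssubset_of_ne hneq) e he2 he1
      · exact key L1 h1 L2 h2 (h.ssubset_of_ne hneq.symm) e he1 he2
      · exact (Finset.disjoint_left.1 h hu1) hu2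
    rw [Finset.card_biUnion hdisj]
    -- singletons
    set Sing := (Finset.univ : Finset V).image (fun a => ({a} : Finset V)) with hSing
    have hSingSub : Sing ⊆ ℒ := by
      intro A hA
      rw [hSing, mem_image] at hA
      obtain ⟨a, -, rfl⟩ := hA
      exact hsingle a
    have hSingCard : Sing.card = Fintype.card V := by
      rw [hSing, Finset.card_image_of_injective _ Finset.singleton_injective,
        Finset.card_univ]
    have hSingChildren : ∀ A ∈ Sing, children ℒ A = ∅ := by
      intro A hA
      rw [hSing, mem_image] at hA
      obtain ⟨a, -, rfl⟩ := hA
      rw [Finset.eq_empty_iff_forall_notMem]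
      intro C hC
      obtain ⟨hC1, hC2, -⟩ := mem_children_iff.1 hC
      rcases Finset.subset_singleton_iff.1 hC2.subset with rfl | rfl
      · exact (hne _ hC1).ne_empty rfl
      · exact hC2.ne rfl
    -- children biUnion = ℒ.erase univ
    have hCU : ℒ.biUnion (children ℒ) = ℒ.erase Finset.univ := by
      ext A
      rw [Finset.mem_biUnion, Finset.mem_erase]
      constructor
      · rintro ⟨L, hL, hA⟩
        obtain ⟨hA1, hA2, -⟩ := mem_children_iff.1 hA
        refine ⟨fun hAu => ?_, hA1⟩
        exact (Finset.ssubset_univ_iff.1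
          (Finset.ssubset_of_ssubset_of_subset hA2 (Finset.subset_univ L))) hAu
      · rintro ⟨hAu, hA⟩
        exact exists_parent ℒ hV A hA hAu
    have hCdisj : ∀ L1 ∈ ℒ, ∀ L2 ∈ ℒ, L1 ≠ L2 →
        Disjoint (children ℒ L1) (children ℒ L2) := by
      intro L1 h1 L2 h2 hneq
      rw [Finset.disjoint_left]
      intro A hA1 hA2
      exact hneq (child_unique ℒ hlaminar hne h1 h2 hA1 hA2)
    have hsumc : ∑ L ∈ ℒ, (children ℒ L).card = ℒ.card - 1 := by
      rw [← Finset.card_biUnion hCdisj, hCU, Finset.card_erase_of_mem hV]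
    -- split off singletons
    have hsplit : ∑ L ∈ ℒ \ Sing, (T L).card + ∑ L ∈ Sing, (T L).card
        = ∑ L ∈ ℒ, (T L).card := Finset.sum_sdiff hSingSub
    have hsingzero : ∑ L ∈ Sing, (T L).card = 0 := by
      refine Finset.sum_eq_zero fun L hL => ?_
      rw [hTcard L (hSingSub hL), hSingChildren L hL]
      simp
    have hsplitc : ∑ L ∈ ℒ \ Sing, (children ℒ L).card + ∑ L ∈ Sing, (children ℒ L).card
        = ∑ L ∈ ℒ, (children ℒ L).card := Finset.sum_sdiff hSingSub
    have hsingzeroc : ∑ L ∈ Sing, (children ℒ L).card = 0 := by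
      refine Finset.sum_eq_zero fun L hL => ?_
      rw [hSingChildren L hL]
      simp
    have hpos : ∀ L ∈ ℒ \ Sing, 1 ≤ (children ℒ L).card := by
      intro L hL
      rw [Finset.mem_sdiff] at hL
      obtain ⟨a, ha⟩ := hne L hL.1
      have hsub : ({a} : Finset V) ⊂ L := by
        refine Finset.ssubset_iff_subset_ne.2 ⟨Finset.singleton_subset_iff.2 ha, ?_⟩
        intro h
        exact hL.2 (by rw [hSing, mem_image]; exact ⟨a, Finset.mem_univ a, h⟩)
      obtain ⟨C, hC, -⟩ := exists_child_above ℒ L {a} (hsingle a) hsub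
      exact Finset.card_pos.2 ⟨C, hC⟩
    have hTsum : ∑ L ∈ ℒ \ Sing, (T L).card
        = ∑ L ∈ ℒ \ Sing, ((children ℒ L).card - 1) := by
      refine Finset.sum_congr rfl fun L hL => ?_
      exact hTcard L ((Finset.mem_sdiff.1 hL).1)
    have hsub1 : ∑ L ∈ ℒ \ Sing, ((children ℒ L).card - 1) + (ℒ \ Sing).card
        = ∑ L ∈ ℒ \ Sing, (children ℒ L).card := by
      rw [Finset.card_eq_sum_ones (ℒ \ Sing), ← Finset.sum_add_distrib]
      exact Finset.sum_congr rfl fun L hL => Nat.sub_add_cancel (hpos L hL)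
    have hcard1 : (ℒ \ Sing).card = ℒ.card - Fintype.card V := by
      rw [Finset.card_sdiff_of_subset hSingSub, hSingCard]
    have hVpos : 1 ≤ Fintype.card V := Fintype.card_pos_iff.2 ⟨(hne _ hV).choose⟩
    have hLc : Fintype.card V ≤ ℒ.card := by
      calc Fintype.card V = Sing.card := hSingCard.symm
        _ ≤ ℒ.card := Finset.card_le_card hSingSub
    omega
  · -- connectivity
    intro S hSne hSuniv
    set s := ℒ.filter (fun L => (L ∩ S).Nonempty ∧ (L \ S).Nonempty) with hs
    have hsne : s.Nonempty := by
      refine ⟨Finset.univ, ?_⟩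
      rw [hs, mem_filter]
      refine ⟨hV, by simpa using hSne, ?_⟩
      rw [Finset.sdiff_nonempty]
      exact fun h => hSuniv (Finset.univ_subset_iff.1 h)
    obtain ⟨L, hLs, hLmin⟩ := s.exists_min_image Finset.card hsne
    rw [hs, mem_filter] at hLs
    obtain ⟨hL, hLS, hLS'⟩ := hLs
    -- R = L ∩ S
    have hmin : ∀ A ∈ ℒ, A ⊂ L → (A ∩ S).Nonempty → A ⊆ S := by
      intro A hA hAL hAS
      by_contra h
      have hAS' : (A \ S).Nonempty := by
        rw [Finset.sdiff_nonempty]; exact h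
      have : A ∈ s := by rw [hs, mem_filter]; exact ⟨hA, hAS, hAS'⟩
      exact absurd (Finset.card_lt_card hAL) (not_lt.2 (hLmin A this))
    have hRL : L ∩ S ⊆ L := Finset.inter_subset_left
    have hRchild : ∀ a ∈ L ∩ S, ∃ A ∈ children ℒ L, a ∈ A ∧ A ⊆ L ∩ S := by
      intro a ha
      rw [Finset.mem_inter] at ha
      have hsub : ({a} : Finset V) ⊂ L := by
        refine Finset.ssubset_iff_subset_ne.2 ⟨Finset.singleton_subset_iff.2 ha.1, ?_⟩
        rintro rfl
        obtain ⟨b, hb⟩ := hLS'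
        rw [Finset.mem_sdiff, Finset.mem_singleton] at hb
        exact hb.2 (hb.1 ▸ ha.2)
      obtain ⟨C, hC, hC2⟩ := exists_child_above ℒ L {a} (hsingle a) hsub
      obtain ⟨hC1, hCL, -⟩ := mem_children_iff.1 hC
      have haC : a ∈ C := hC2 (Finset.mem_singleton_self a)
      have hCS : C ⊆ S := hmin C hC1 hCL ⟨a, Finset.mem_inter.2 ⟨haC, ha.2⟩⟩
      exact ⟨C, hC, haC, Finset.subset_inter hCL.subset hCS⟩
    have hRneq : L ∩ S ≠ L := by
      intro h
      obtain ⟨b, hb⟩ := hLS'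
      rw [Finset.mem_sdiff] at hb
      have : b ∈ L ∩ S := h.symm ▸ hb.1
      exact hb.2 (Finset.mem_inter.1 this).2
    obtain ⟨e, he, hcross⟩ := hTconn L hL (L ∩ S) hRL hRchild hLS hRneq
    refine ⟨e, Finset.mem_biUnion.2 ⟨L, hL, he⟩, ?_⟩
    rcases hcross with ⟨h1, h2⟩ | ⟨h1, h2⟩
    · left
      refine ⟨(Finset.mem_inter.1 h1).2, fun h => ?_⟩
      rw [Finset.mem_sdiff] at h2
      exact h2.2 (Finset.mem_inter.2 ⟨h2.1, h⟩)
    · right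
      refine ⟨fun h => ?_, (Finset.mem_inter.1 h1).2⟩
      rw [Finset.mem_sdiff] at h2
      exact h2.2 (Finset.mem_inter.2 ⟨h2.1, h⟩)
end

section
/- Bicriteria guarantee from a (α,β)-approximation face-preserving rounding: let P ⊆ ℝ^n be a polytope, c ∈ ℝ^n, A ∈ ℝ^{m×n} with nonnegative entries, b ∈ ℝ_+^m, α > 1. Suppose x* is optimal for min{cᵀx : x ∈ P, Ax ≤ αb}, y* ∈ ℝ_+^m satisfies: x* minimizes (c + Aᵀy*)ᵀx over P, y*_i > 0 implies A_iᵀx* = αb_i, and min_{x∈P}(cᵀx + (y*)ᵀ(Ax − b)) ≤ OPT(1) := min{cᵀx : x ∈ P, Ax ≤ b} (assumed feasible). If x̂ lies on the minimal face of P containing x*, satisfies Ax̂ ≤ β·Ax* componentwise, and A_iᵀx̂ ≥ (A_iᵀx*)/α for every i with A_iᵀx* = αb_i, then cᵀx̂ ≤ OPT(1) and Ax̂ ≤ αβ·b. -/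
open Matrix


lemma argmin_isExtreme {n : ℕ} (P : Set (Fin n → ℝ)) (d x0 : Fin n → ℝ)
    (hx0 : x0 ∈ P) (hmin : ∀ x ∈ P, d ⬝ᵥ x0 ≤ d ⬝ᵥ x) :
    IsExtreme ℝ P {x ∈ P | d ⬝ᵥ x = d ⬝ᵥ x0} := by
  constructor
  · exact fun x hx => hx.1
  · rintro x1 hx1 x2 hx2 x ⟨hxP, hxe⟩ ⟨a, b, ha, hb, hab, hx⟩
    have hlin : d ⬝ᵥ (a • x1 + b • x2) = a * (d ⬝ᵥ x1) + b * (d ⬝ᵥ x2) := by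
      rw [dotProduct_add, dotProduct_smul, dotProduct_smul,
        smul_eq_mul, smul_eq_mul]
    rw [← hx, hlin] at hxe
    have h1 := hmin x1 hx1
    have h2 := hmin x2 hx2
    have key0 : a * (d ⬝ᵥ x0) + b * (d ⬝ᵥ x0) = d ⬝ᵥ x0 := by
      rw [← add_mul, hab, one_mul]
    have e1 : d ⬝ᵥ x1 = d ⬝ᵥ x0 := by
      by_contra h
      have hlt : d ⬝ᵥ x0 < d ⬝ᵥ x1 := lt_of_le_of_ne h1 (Ne.symm h)
      have h1' := mul_lt_mul_of_pos_left hlt ha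
      have h2' := mul_le_mul_of_nonneg_left h2 hb.le
      linarith
    have e2 : d ⬝ᵥ x2 = d ⬝ᵥ x0 := by
      by_contra h
      have hlt : d ⬝ᵥ x0 < d ⬝ᵥ x2 := lt_of_le_of_ne h2 (Ne.symm h)
      have h2' := mul_lt_mul_of_pos_left hlt hb
      have h1' := mul_le_mul_of_nonneg_left h1 ha.le
      linarith
    exact ⟨hx1, e1⟩

/-- bicriteria guarantee from an `(α,β)`-approximation face-preserving
rounding.  With `x*` optimal for the LP with inflated constraints `Ax ≤ αb`, `y* ≥ 0`
certifying Lagrangian optimality with the support condition `y*_i > 0 → A_iᵀx* = αb_i`,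
weak duality `g_1(y*) ≤ OPT(1)`, and a rounding `x̂` on the minimal face of `P`
containing `x*` satisfying `Ax̂ ≤ β·Ax*` together with `A_iᵀx̂ ≥ (A_iᵀx*)/α` for the
tight rows, we get `cᵀx̂ ≤ OPT(1)` and `Ax̂ ≤ αβ·b`. -/
theorem alpha_beta_bicriteria {n m : ℕ} (P : Set (Fin n → ℝ))
    (hpoly : ∃ s : Finset (Fin n → ℝ), P = convexHull ℝ (↑s : Set (Fin n → ℝ)))
    (c : Fin n → ℝ)
    (A : Matrix (Fin m) (Fin n) ℝ) (hA : ∀ i j, 0 ≤ A i j)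
    (b : Fin m → ℝ) (hb : ∀ i, 0 ≤ b i)
    (α : ℝ) (hα : 1 < α)
    (OPT1 : ℝ)
    (hOPT1 : OPT1 = sInf ((fun x => c ⬝ᵥ x) '' {x ∈ P | ∀ i, A.mulVec x i ≤ b i}))
    (hfeas1 : {x ∈ P | ∀ i, A.mulVec x i ≤ b i}.Nonempty)
    -- x* is optimal for min{cᵀx : x ∈ P, Ax ≤ αb}
    (xstar : Fin n → ℝ) (hxP : xstar ∈ P)
    (hxfeas : ∀ i, A.mulVec xstar i ≤ α * b i)
    (hxopt : c ⬝ᵥ xstar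
      = sInf ((fun x => c ⬝ᵥ x) '' {x ∈ P | ∀ i, A.mulVec x i ≤ α * b i}))
    -- y* ≥ 0, Lagrangian optimality, support condition, weak duality
    (ystar : Fin m → ℝ) (hy : ∀ i, 0 ≤ ystar i)
    (hmin : ∀ x ∈ P,
      (c + A.transpose.mulVec ystar) ⬝ᵥ xstar ≤ (c + A.transpose.mulVec ystar) ⬝ᵥ x)
    (hsupp : ∀ i, 0 < ystar i → A.mulVec xstar i = α * b i)
    (hweak : sInf ((fun x => c ⬝ᵥ x + ystar ⬝ᵥ (A.mulVec x - b)) '' P) ≤ OPT1)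
    -- x̂ lies on the minimal face of P containing x*, with the (α,β) rounding bounds
    (F : Set (Fin n → ℝ)) (hF : IsExtreme ℝ P F) (hxF : xstar ∈ F)
    (hFmin : ∀ G : Set (Fin n → ℝ), IsExtreme ℝ P G → xstar ∈ G → F ⊆ G)
    (xhat : Fin n → ℝ) (hxhatF : xhat ∈ F)
    (beta : ℝ) (hbeta : 1 ≤ beta)
    (hround : ∀ i, A.mulVec xhat i ≤ beta * A.mulVec xstar i)
    (hlower : ∀ i, A.mulVec xstar i = α * b i → A.mulVec xstar i / α ≤ A.mulVec xhat i) :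
    c ⬝ᵥ xhat ≤ OPT1 ∧ ∀ i, A.mulVec xhat i ≤ α * beta * b i := by

  have hαpos : (0:ℝ) < α := by linarith
  set d := c + A.transpose.mulVec ystar with hd
  -- x̂ is in P and in the argmin face
  have hGext := argmin_isExtreme P d xstar hxP hmin
  have hFG := hFmin _ hGext ⟨hxP, rfl⟩
  have hxhatG := hFG hxhatF
  have hxhatP : xhat ∈ P := hxhatG.1
  have hdeq : d ⬝ᵥ xhat = d ⬝ᵥ xstar := hxhatG.2
  -- dot product identities
  have key : ∀ z : Fin n → ℝ, d ⬝ᵥ z = c ⬝ᵥ z + ystar ⬝ᵥ A.mulVec z := by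
    intro z
    rw [hd, add_dotProduct, Matrix.mulVec_transpose,
      ← Matrix.dotProduct_mulVec]
  -- y*ᵀ A x̂ ≥ y*ᵀ b
  have hyb : ystar ⬝ᵥ b ≤ ystar ⬝ᵥ A.mulVec xhat := by
    apply Finset.sum_le_sum
    intro i _
    rcases lt_or_eq_of_le (hy i) with hpos | hzero
    · have ht := hsupp i hpos
      have := hlower i ht
      rw [ht] at this
      have hbi : b i ≤ A.mulVec xhat i := by
        rw [show α * b i / α = b i from by field_simp] at this
        exact this
      exact mul_le_mul_of_nonneg_left hbi (hy i)
    · simp [← hzero]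
  -- lagrangian value at xstar is a lower bound of the image set
  have hlb : c ⬝ᵥ xstar + ystar ⬝ᵥ (A.mulVec xstar - b)
      ≤ sInf ((fun x => c ⬝ᵥ x + ystar ⬝ᵥ (A.mulVec x - b)) '' P) := by
    refine le_csInf ⟨_, ⟨xstar, hxP, rfl⟩⟩ ?_
    rintro w ⟨x, hxPmem, rfl⟩
    have := hmin x hxPmem
    rw [key xstar, key x] at this
    dsimp only
    rw [dotProduct_sub, dotProduct_sub]
    linarith
  constructor
  · have h1 : c ⬝ᵥ xhat + ystar ⬝ᵥ A.mulVec xhat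
        = c ⬝ᵥ xstar + ystar ⬝ᵥ A.mulVec xstar := by
      rw [← key, ← key, hdeq]
    have h2 : c ⬝ᵥ xstar + ystar ⬝ᵥ (A.mulVec xstar - b) ≤ OPT1 := le_trans hlb hweak
    rw [dotProduct_sub] at h2
    linarith
  · intro i
    calc A.mulVec xhat i ≤ beta * A.mulVec xstar i := hround i
      _ ≤ beta * (α * b i) := by
          apply mul_le_mul_of_nonneg_left (hxfeas i); linarith
      _ = α * beta * b i := by ring
end

section
/- Rainbow-free order implies rainbow-freeness after potential minimization: let e₁, …, e_k be edges with associated sets 𝒮_{e_i} ⊆ 𝒮 ordered so that |𝒮_{e₁}| ≤ |𝒮_{e₂}| ≤ … ≤ |𝒮_{e_k}|, and let w be strictly increasing along this order (w_{e₁} < … < w_{e_k}). If x' minimizes wᵀz over a polytope containing both x' and, for each pair e = e_i, f = e_j with i < j, 𝒮_{e_i} ⊆ 𝒮_{e_j}, and the feasibility-preserving transfer of ε > 0 from f to e (as in the weight-transfer lemma), then no two edges e, f ∈ supp(x') lying in a common tight-set block with 𝒮_e ⊆ 𝒮_f can both have positive value with w_e < w_f. -/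
open Finset
open scoped Classical

/-- rainbow-freeness after potential minimization.  Let `x'` minimize the
potential `wᵀz` over a polytope `Q` (the feasible region of the potential LP).  Suppose
`e, f` are edges lying in a common tight-set block `L` (both lie in `E(L)` with `L`
tight at `x'`), with `𝒮_e ⊆ 𝒮_f` (every chain set cut by `e` is cut by `f`) and
`w_e < w_f`, and suppose the `ε`-transfer from `f` to `e` preserves membership in `Q`
(the feasibility-preserving transfer).  Then `e` and `f` cannot both lie in
`supp(x')`. -/
theorem rainbow_free_after_minimization {V E : Type*} [Fintype V] [Fintype E]
    (u v : E → V) (𝒮 : Finset (Finset V))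
    (Q : Set (E → ℝ))
    (hQpoly : ∃ s : Finset (E → ℝ), Q = convexHull ℝ (↑s : Set (E → ℝ)))
    (w : E → ℝ) (x' : E → ℝ) (hx'Q : x' ∈ Q)
    (hmin : ∀ z ∈ Q, ∑ g, w g * x' g ≤ ∑ g, w g * z g)
    (e f : E)
    -- e and f lie in a common tight-set block L of a laminar decomposition of x'
    (L : Finset V)
    (heL : u e ∈ L ∧ v e ∈ L) (hfL : u f ∈ L ∧ v f ∈ L)
    (hLtight : ∑ g ∈ Finset.univ.filter (fun g => u g ∈ L ∧ v g ∈ L), x' g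
      = (L.card : ℝ) - 1)
    -- 𝒮_e ⊆ 𝒮_f
    (hsub : ∀ S ∈ 𝒮,
      ((u e ∈ S ∧ v e ∉ S) ∨ (u e ∉ S ∧ v e ∈ S)) →
      ((u f ∈ S ∧ v f ∉ S) ∨ (u f ∉ S ∧ v f ∈ S)))
    (hw : w e < w f)
    -- the feasibility-preserving transfer of ε from f to e stays in Q
    (htransfer : ∀ ε : ℝ, 0 < ε → ε ≤ x' f →
      (fun g => x' g + (if g = e then ε else 0) - (if g = f then ε else 0)) ∈ Q) :
    ¬ (0 < x' e ∧ 0 < x' f) := by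
  rintro ⟨-, hf⟩
  have hz := htransfer (x' f) hf le_rfl
  have hle := hmin _ hz
  have hsum : ∑ g, w g * (x' g + (if g = e then x' f else 0) - (if g = f then x' f else 0))
      = ∑ g, w g * x' g + (w e * x' f - w f * x' f) := by
    have h1 : ∀ g : E, w g * (x' g + (if g = e then x' f else 0) - (if g = f then x' f else 0))
        = w g * x' g + ((if g = e then w g * x' f else 0) - (if g = f then w g * x' f else 0)) := by
      intro g; split_ifs <;> ring
    rw [Finset.sum_congr rfl (fun g _ => h1 g), Finset.sum_add_distrib,
      Finset.sum_sub_distrib, Finset.sum_ite_eq' Finset.univ e (fun g => w g * x' f),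
      Finset.sum_ite_eq' Finset.univ f (fun g => w g * x' f)]
    simp
  rw [hsum] at hle
  nlinarith
end

section
/- Cost decomposition along a laminar partition with equal costs per block: let G = (V,E) be connected, x a point in the spanning tree polytope of G, ℒ a laminar family containing V and all singletons with x(E(L)) = |L|−1 for all L ∈ ℒ, and suppose that for each L ∈ ℒ all edges of supp(x) ∩ E_L have equal cost c-value, where E_L are the edges of the contraction graph G_L (so {E_L}_{L∈ℒ} partitions E). If T is a spanning tree of G such that T ∩ E_L is a spanning tree of G_L for every L ∈ ℒ and T ⊆ supp(x), then Σ_{e∈T} c_e = Σ_{e∈E} c_e x_e. -/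
open Finset
open scoped Classical

/-- cost decomposition along a laminar partition with equal costs per
block.  If `x` lies in the spanning tree polytope, all members of the laminar family `ℒ`
(containing `V` and all singletons) are tight at `x`, all support edges within each
block `E_L` have the same cost, and `T ⊆ supp(x)` is a spanning tree of `G` whose
intersection with each block `E_L` is a spanning tree of the contraction `G_L`, then
`Σ_{e ∈ T} c_e = Σ_e c_e x_e`. -/
theorem cost_decomposition {V E : Type*} [Fintype V] [Fintype E]
    [DecidableEq V] [DecidableEq E]
    (u v : E → V)
    (hconn : (SimpleGraph.fromRel (fun a b => ∃ e : E, u e = a ∧ v e = b)).Connected)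
    (c : E → ℝ) (x : E → ℝ)
    -- x is in the spanning tree polytope of G
    (hx0 : ∀ e, 0 ≤ x e)
    (hxsub : ∀ S : Finset V, S.Nonempty → S ≠ Finset.univ →
      ∑ e ∈ Finset.univ.filter (fun e => u e ∈ S ∧ v e ∈ S), x e ≤ (S.card : ℝ) - 1)
    (hxspan : ∑ e : E, x e = (Fintype.card V : ℝ) - 1)
    -- ℒ is a laminar family containing V and all singletons, all members tight at x
    (ℒ : Finset (Finset V))
    (hlaminar : ∀ A ∈ ℒ, ∀ B ∈ ℒ, A ⊆ B ∨ B ⊆ A ∨ Disjoint A B)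
    (hne : ∀ A ∈ ℒ, A.Nonempty)
    (hV : (Finset.univ : Finset V) ∈ ℒ)
    (hsingle : ∀ a : V, ({a} : Finset V) ∈ ℒ)
    (htight : ∀ L ∈ ℒ,
      ∑ e ∈ Finset.univ.filter (fun e => u e ∈ L ∧ v e ∈ L), x e = (L.card : ℝ) - 1)
    -- within each block, all support edges have equal cost
    (heq : ∀ L ∈ ℒ, ∀ e e' : E, edgeOfBlock u v ℒ L e → edgeOfBlock u v ℒ L e' →
      0 < x e → 0 < x e' → c e = c e')
    -- T ⊆ supp(x) and T ∩ E_L is a spanning tree of G_L for every L ∈ ℒ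
    (T : Finset E)
    (hTsupp : ∀ e ∈ T, 0 < x e)
    (hTcard : ∀ L ∈ ℒ,
      (T.filter (edgeOfBlock u v ℒ L)).card = (children ℒ L).card - 1)
    (hTconn : ∀ L ∈ ℒ, ∀ R : Finset V, R ⊆ L →
      (∀ a ∈ R, ∃ A ∈ children ℒ L, a ∈ A ∧ A ⊆ R) → R.Nonempty → R ≠ L →
      ∃ e ∈ T.filter (edgeOfBlock u v ℒ L),
        (u e ∈ R ∧ v e ∈ L \ R) ∨ (v e ∈ R ∧ u e ∈ L \ R)) :
    ∑ e ∈ T, c e = ∑ e : E, c e * x e := by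
  classical
  -- children are members of ℒ properly contained in L
  have childMem : ∀ {L A : Finset V}, A ∈ children ℒ L → A ∈ ℒ ∧ A ⊂ L := by
    intro L A hA
    simp only [children, Finset.mem_filter] at hA
    exact ⟨hA.1, hA.2.1⟩
  -- Step B: every proper ℒ-subset of L is contained in a child of L
  have stepB : ∀ L ∈ ℒ, ∀ A ∈ ℒ, A ⊂ L → ∃ B ∈ children ℒ L, A ⊆ B := by
    intro L hL A hA hAL
    obtain ⟨B, hB, hBmax⟩ := Finset.exists_max_image
      (ℒ.filter (fun B => A ⊆ B ∧ B ⊂ L)) Finset.card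
      ⟨A, by simp [hA, hAL]⟩
    simp only [Finset.mem_filter] at hB
    refine ⟨B, ?_, hB.2.1⟩
    simp only [children, Finset.mem_filter]
    refine ⟨hB.1, hB.2.2, ?_⟩
    intro C hC hBC hCL
    have := hBmax C (by simp [hC, hB.2.1.trans hBC.subset, hCL])
    exact absurd (Finset.card_lt_card hBC) (not_lt.mpr this)
  -- Step A: minimal member of ℒ containing both endpoints
  have stepA : ∀ e : E, ∃ L ∈ ℒ, (u e ∈ L ∧ v e ∈ L) ∧
      ∀ L' ∈ ℒ, u e ∈ L' → v e ∈ L' → L ⊆ L' := by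
    intro e
    obtain ⟨L, hL, hLmin⟩ := Finset.exists_min_image
      (ℒ.filter (fun L => u e ∈ L ∧ v e ∈ L)) Finset.card
      ⟨Finset.univ, by simp [hV]⟩
    simp only [Finset.mem_filter] at hL
    refine ⟨L, hL.1, hL.2, ?_⟩
    intro L' hL' hu hv
    rcases hlaminar L hL.1 L' hL' with h | h | h
    · exact h
    · have hle := hLmin L' (by simp [hL', hu, hv])
      have : L' = L := Finset.eq_of_subset_of_card_le h hle
      exact this ▸ Finset.Subset.refl _
    · exact absurd hu (Finset.disjoint_left.mp h hL.2.1)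
  -- Step C: any block containing e is the minimal member containing both endpoints
  have stepC : ∀ L ∈ ℒ, ∀ e : E, edgeOfBlock u v ℒ L e →
      ∀ L' ∈ ℒ, u e ∈ L' → v e ∈ L' → L ⊆ L' := by
    intro L hL e he L' hL' hu hv
    rcases hlaminar L hL L' hL' with h | h | h
    · exact h
    · rcases eq_or_ne L' L with rfl | hne'
      · exact Finset.Subset.refl _
      · obtain ⟨B, hB, hLB⟩ := stepB L hL L' hL' (Finset.ssubset_iff_subset_ne.mpr ⟨h, hne'⟩)
        exact absurd ⟨B, hB, hLB hu, hLB hv⟩ he.2.2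
    · exact absurd hu (Finset.disjoint_left.mp h he.1)
  -- uniqueness of blocks
  have stepUniq : ∀ L ∈ ℒ, ∀ L' ∈ ℒ, ∀ e : E,
      edgeOfBlock u v ℒ L e → edgeOfBlock u v ℒ L' e → L = L' := by
    intro L hL L' hL' e he he'
    exact Finset.Subset.antisymm (stepC L hL e he L' hL' he'.1 he'.2.1)
      (stepC L' hL' e he' L hL he.1 he.2.1)
  -- existence of a block for each edge
  have stepEx : ∀ e : E, ∃ L ∈ ℒ, edgeOfBlock u v ℒ L e := by
    intro e
    obtain ⟨L, hL, ⟨hu, hv⟩, hmin⟩ := stepA e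
    refine ⟨L, hL, hu, hv, ?_⟩
    rintro ⟨A, hA, huA, hvA⟩
    obtain ⟨hAL, hALss⟩ := childMem hA
    exact absurd (hmin A hAL huA hvA) (Finset.not_subset.mpr
      (by obtain ⟨a, haL, haA⟩ := Finset.exists_of_ssubset hALss; exact ⟨a, haL, haA⟩))
  -- partition lemma: sums over any S decompose along blocks
  have partSum : ∀ (S : Finset E) (g : E → ℝ),
      ∑ e ∈ S, g e = ∑ L ∈ ℒ, ∑ e ∈ S.filter (edgeOfBlock u v ℒ L), g e := by
    intro S g
    have : ∀ L ∈ ℒ, ∑ e ∈ S.filter (edgeOfBlock u v ℒ L), g e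
        = ∑ e ∈ S, if edgeOfBlock u v ℒ L e then g e else 0 := by
      intro L _; rw [Finset.sum_filter]
    rw [Finset.sum_congr rfl this, Finset.sum_comm]
    refine Finset.sum_congr rfl fun e _ => ?_
    obtain ⟨L0, hL0, he0⟩ := stepEx e
    rw [Finset.sum_eq_single L0]
    · simp [he0]
    · intro L hL hLne
      simp only [ite_eq_right_iff]
      intro he
      exact absurd (stepUniq L hL L0 hL0 e he he0) hLne
    · intro h; exact absurd hL0 h
  -- children of L are pairwise disjoint
  have childDisj : ∀ L ∈ ℒ, ∀ A ∈ children ℒ L, ∀ B ∈ children ℒ L,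
      A ≠ B → Disjoint A B := by
    intro L hL A hA B hB hAB
    obtain ⟨hAℒ, hAL⟩ := childMem hA
    obtain ⟨hBℒ, hBL⟩ := childMem hB
    simp only [children, Finset.mem_filter] at hA hB
    rcases hlaminar A hAℒ B hBℒ with h | h | h
    · exact absurd hBL (hA.2.2 B hBℒ (Finset.ssubset_iff_subset_ne.mpr ⟨h, hAB⟩))
    · exact absurd hAL (hB.2.2 A hAℒ (Finset.ssubset_iff_subset_ne.mpr ⟨h, hAB.symm⟩))
    · exact h
  -- children cover L (when |L| ≥ 2)
  have childCover : ∀ L ∈ ℒ, 1 < L.card → ∀ a ∈ L, ∃ A ∈ children ℒ L, a ∈ A := by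
    intro L hL hcard a haL
    have hss : ({a} : Finset V) ⊂ L := by
      refine Finset.ssubset_iff_subset_ne.mpr ⟨Finset.singleton_subset_iff.mpr haL, ?_⟩
      intro h
      rw [← h] at hcard
      simp at hcard
    obtain ⟨B, hB, hsub⟩ := stepB L hL {a} (hsingle a) hss
    exact ⟨B, hB, hsub (Finset.mem_singleton_self a)⟩
  -- the children of L biUnion to L
  have childUnion : ∀ L ∈ ℒ, 1 < L.card → (children ℒ L).biUnion id = L := by
    intro L hL hcard
    apply Finset.Subset.antisymm
    · intro a ha
      simp only [Finset.mem_biUnion, id] at ha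
      obtain ⟨A, hA, haA⟩ := ha
      exact (childMem hA).2.subset haA
    · intro a ha
      obtain ⟨A, hA, haA⟩ := childCover L hL hcard a ha
      exact Finset.mem_biUnion.mpr ⟨A, hA, haA⟩
  have childCardSum : ∀ L ∈ ℒ, 1 < L.card → ∑ A ∈ children ℒ L, A.card = L.card := by
    intro L hL hcard
    have hd : ((children ℒ L).biUnion id).card = ∑ A ∈ children ℒ L, (id A).card :=
      Finset.card_biUnion (fun A hA B hB hAB => childDisj L hL A hA B hB hAB)
    rw [childUnion L hL hcard] at hd
    simpa using hd.symm
  have childNe : ∀ L ∈ ℒ, 1 < L.card → (children ℒ L).Nonempty := by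
    intro L hL hcard
    obtain ⟨a, ha⟩ := hne L hL
    obtain ⟨A, hA, _⟩ := childCover L hL hcard a ha
    exact ⟨A, hA⟩
  -- Step F: x-mass of a block
  have stepF : ∀ L ∈ ℒ, 1 < L.card →
      ∑ e ∈ Finset.univ.filter (edgeOfBlock u v ℒ L), x e
        = ((children ℒ L).card : ℝ) - 1 := by
    intro L hL hcard
    have hdecomp : Finset.univ.filter (fun e => u e ∈ L ∧ v e ∈ L)
        = Finset.univ.filter (edgeOfBlock u v ℒ L)
          ∪ (children ℒ L).biUnion
              (fun A => Finset.univ.filter (fun e => u e ∈ A ∧ v e ∈ A)) := by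
      ext e
      simp only [Finset.mem_union, Finset.mem_biUnion, Finset.mem_filter,
        Finset.mem_univ, true_and, edgeOfBlock]
      constructor
      · rintro ⟨hu, hv⟩
        by_cases h : ∃ A ∈ children ℒ L, u e ∈ A ∧ v e ∈ A
        · obtain ⟨A, hA, hh⟩ := h
          exact Or.inr ⟨A, hA, hh⟩
        · exact Or.inl ⟨hu, hv, h⟩
      · rintro (⟨hu, hv, _⟩ | ⟨A, hA, huA, hvA⟩)
        · exact ⟨hu, hv⟩
        · exact ⟨(childMem hA).2.subset huA, (childMem hA).2.subset hvA⟩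
    have hdisj : Disjoint (Finset.univ.filter (edgeOfBlock u v ℒ L))
        ((children ℒ L).biUnion
          (fun A => Finset.univ.filter (fun e => u e ∈ A ∧ v e ∈ A))) := by
      rw [Finset.disjoint_left]
      intro e he he'
      simp only [Finset.mem_filter, Finset.mem_univ, true_and, edgeOfBlock] at he
      simp only [Finset.mem_biUnion, Finset.mem_filter, Finset.mem_univ, true_and] at he'
      obtain ⟨A, hA, hh⟩ := he'
      exact he.2.2 ⟨A, hA, hh⟩
    have hsum : ∑ e ∈ Finset.univ.filter (fun e => u e ∈ L ∧ v e ∈ L), x e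
        = ∑ e ∈ Finset.univ.filter (edgeOfBlock u v ℒ L), x e
          + ∑ A ∈ children ℒ L,
              ∑ e ∈ Finset.univ.filter (fun e => u e ∈ A ∧ v e ∈ A), x e := by
      rw [hdecomp, Finset.sum_union hdisj, Finset.sum_biUnion]
      intro A hA B hB hAB
      simp only [Finset.mem_coe] at hA hB
      simp only [Function.onFun]
      rw [Finset.disjoint_left]
      intro e he he'
      simp only [Finset.mem_filter, Finset.mem_univ, true_and] at he he'
      exact Finset.disjoint_left.mp (childDisj L hL A hA B hB hAB) he.1 he'.1
    have htightL := htight L hL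
    have htightA : ∀ A ∈ children ℒ L,
        ∑ e ∈ Finset.univ.filter (fun e => u e ∈ A ∧ v e ∈ A), x e
          = (A.card : ℝ) - 1 := fun A hA => htight A (childMem hA).1
    have hsum2 : ∑ A ∈ children ℒ L,
        ∑ e ∈ Finset.univ.filter (fun e => u e ∈ A ∧ v e ∈ A), x e
          = (L.card : ℝ) - ((children ℒ L).card : ℝ) := by
      rw [Finset.sum_congr rfl htightA, Finset.sum_sub_distrib, Finset.sum_const]
      have : ∑ A ∈ children ℒ L, (A.card : ℝ) = (L.card : ℝ) := by
        rw [← Nat.cast_sum]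
        exact_mod_cast congrArg (Nat.cast (R := ℝ)) (childCardSum L hL hcard)
      rw [this]
      simp
    rw [htightL, hsum2] at hsum
    linarith
  -- Step G: per-block equality of T-sum and fractional sum
  have stepG : ∀ L ∈ ℒ, ∑ e ∈ T.filter (edgeOfBlock u v ℒ L), c e
      = ∑ e ∈ Finset.univ.filter (edgeOfBlock u v ℒ L), c e * x e := by
    intro L hL
    by_cases hsupp : ∃ e0 ∈ Finset.univ.filter (edgeOfBlock u v ℒ L), 0 < x e0
    · obtain ⟨e0, he0m, he0x⟩ := hsupp
      simp only [Finset.mem_filter, Finset.mem_univ, true_and] at he0m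
      -- L must have at least two elements
      have hcard : 1 < L.card := by
        by_contra hc
        push_neg at hc
        have h1 : L.card = 1 := le_antisymm hc (Finset.card_pos.mpr (hne L hL))
        have hx0' : ∑ e ∈ Finset.univ.filter (fun e => u e ∈ L ∧ v e ∈ L), x e
            = 0 := by rw [htight L hL, h1]; simp
        have hmem : e0 ∈ Finset.univ.filter (fun e => u e ∈ L ∧ v e ∈ L) := by
          simp [he0m.1, he0m.2.1]
        have := Finset.sum_eq_zero_iff_of_nonneg
          (fun e _ => hx0 e) |>.mp hx0' e0 hmem
        exact absurd this (ne_of_gt he0x)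
      have hchild1 : 1 ≤ (children ℒ L).card :=
        Finset.card_pos.mpr (childNe L hL hcard)
      -- RHS
      have hRHS : ∑ e ∈ Finset.univ.filter (edgeOfBlock u v ℒ L), c e * x e
          = c e0 * (((children ℒ L).card : ℝ) - 1) := by
        rw [← stepF L hL hcard, Finset.mul_sum]
        refine Finset.sum_congr rfl fun e he => ?_
        simp only [Finset.mem_filter, Finset.mem_univ, true_and] at he
        rcases (hx0 e).lt_or_eq with hlt | heq0
        · rw [heq L hL e e0 he he0m hlt he0x]
        · rw [← heq0, mul_zero, mul_zero]
      -- LHS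
      have hLHS : ∑ e ∈ T.filter (edgeOfBlock u v ℒ L), c e
          = c e0 * (((children ℒ L).card : ℝ) - 1) := by
        have hconst : ∀ e ∈ T.filter (edgeOfBlock u v ℒ L), c e = c e0 := by
          intro e he
          simp only [Finset.mem_filter] at he
          exact heq L hL e e0 he.2 he0m (hTsupp e he.1) he0x
        rw [Finset.sum_congr rfl hconst, Finset.sum_const, hTcard L hL,
          nsmul_eq_mul, Nat.cast_sub hchild1]
        ring
      rw [hLHS, hRHS]
    · push_neg at hsupp
      have hx00 : ∀ e ∈ Finset.univ.filter (edgeOfBlock u v ℒ L), x e = 0 :=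
        fun e he => le_antisymm (hsupp e he) (hx0 e)
      have hT0 : T.filter (edgeOfBlock u v ℒ L) = ∅ := by
        rw [Finset.filter_eq_empty_iff]
        intro e heT heB
        have : x e = 0 := hx00 e (by simp [heB])
        exact absurd this (ne_of_gt (hTsupp e heT))
      rw [hT0, Finset.sum_empty]
      exact (Finset.sum_eq_zero fun e he => by rw [hx00 e he, mul_zero]).symm
  -- assemble
  have h1 : ∑ e ∈ T, c e = ∑ L ∈ ℒ, ∑ e ∈ T.filter (edgeOfBlock u v ℒ L), c e :=
    partSum T c
  have h2 : ∑ e : E, c e * x e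
      = ∑ L ∈ ℒ, ∑ e ∈ Finset.univ.filter (edgeOfBlock u v ℒ L), c e * x e :=
    partSum Finset.univ (fun e => c e * x e)
  rw [h1, h2]
  exact Finset.sum_congr rfl stepG
end
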